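/- Under the iteration hypotheses (T₁, T₂ continuous nonself total asymptotically nonexpansive with ∑μ_n < ∞, ∑λ_n < ∞, φ(κ) ≤ M*κ for κ ≥ M, F ≠ ∅, K closed convex in a Banach space E), the sequence {x_n} generated by x_{n+1} = (1−α_n)(PT₁)^n y_n + α_n(PT₂)^n y_n, y_n = (1−β_n)x_n + β_n(PT₁)^n x_n converges strongly to a common fixed point of T₁ and T₂ if and only if liminf d(x_n, F) = 0. -/

import Mathlib

open Filter Metric

/-- Product-form growth bound for an "almost decreasing" recursion. -/
lemma aux_prod_bound (s c e : ℕ → ℝ) (hc : ∀ n, 0 ≤ c n) (he : ∀ n, 0 ≤ e n)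
    (hs : ∀ n, 0 ≤ s n)
    (hrec : ∀ n, 1 ≤ n → s (n + 1) ≤ (1 + c n) * s n + e n) :
    ∀ n, 1 ≤ n → ∀ m, n ≤ m →
      s m ≤ (∏ k ∈ Finset.Ico n m, (1 + c k)) * (s n + ∑ k ∈ Finset.Ico n m, e k) := by
  intro n hn m hm
  induction m, hm using Nat.le_induction with
  | base =>
      simp only [Finset.Ico_self, Finset.prod_empty, Finset.sum_empty, one_mul, add_zero]
      exact le_rfl
  | succ m hm ih =>
      rw [Nat.Ico_succ_right_eq_insert_Ico hm, Finset.prod_insert Finset.right_notMem_Ico,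
        Finset.sum_insert Finset.right_notMem_Ico]
      set Pr := ∏ k ∈ Finset.Ico n m, (1 + c k) with hPr
      set Sg := ∑ k ∈ Finset.Ico n m, e k with hSg
      have hP1 : (1 : ℝ) ≤ Pr := by
        rw [hPr]
        have := Finset.prod_le_prod (s := Finset.Ico n m) (f := fun _ => (1:ℝ))
          (g := fun k => 1 + c k) (fun k _ => zero_le_one) (fun k _ => by simpa using hc k)
        simpa using this
      have hSig : (0 : ℝ) ≤ Sg := Finset.sum_nonneg fun k _ => he k
      have h1 := hrec m (le_trans hn hm)
      have h2 : (1 + c m) * s m ≤ (1 + c m) * (Pr * (s n + Sg)) :=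
        mul_le_mul_of_nonneg_left ih (by linarith [hc m])
      have h3 : (1:ℝ) ≤ (1 + c m) * Pr := by nlinarith [hc m]
      have h4 : e m ≤ ((1 + c m) * Pr) * e m := le_mul_of_one_le_left (he m) h3
      calc s (m+1) ≤ (1 + c m) * s m + e m := h1
        _ ≤ (1 + c m) * (Pr * (s n + Sg)) + ((1 + c m) * Pr) * e m := by linarith
        _ = ((1 + c m) * Pr) * (s n + (e m + Sg)) := by ring

lemma aux_growth (s c e : ℕ → ℝ) (hc : ∀ n, 0 ≤ c n) (he : ∀ n, 0 ≤ e n)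
    (hs : ∀ n, 0 ≤ s n) (hcs : Summable c)
    (hrec : ∀ n, 1 ≤ n → s (n + 1) ≤ (1 + c n) * s n + e n) :
    ∀ n, 1 ≤ n → ∀ m, n ≤ m →
      s m ≤ Real.exp (∑' k, c k) * (s n + ∑ k ∈ Finset.Ico n m, e k) := by
  intro n hn m hm
  have h := aux_prod_bound s c e hc he hs hrec n hn m hm
  have hP : (∏ k ∈ Finset.Ico n m, (1 + c k)) ≤ Real.exp (∑' k, c k) := by
    calc (∏ k ∈ Finset.Ico n m, (1 + c k)) ≤ ∏ k ∈ Finset.Ico n m, Real.exp (c k) :=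
          Finset.prod_le_prod (fun k _ => by linarith [hc k])
            (fun k _ => by linarith [Real.add_one_le_exp (c k)])
      _ = Real.exp (∑ k ∈ Finset.Ico n m, c k) := (Real.exp_sum _ _).symm
      _ ≤ Real.exp (∑' k, c k) := Real.exp_le_exp.mpr (Summable.sum_le_tsum _ (fun k _ => hc k) hcs)
  have hA : (0 : ℝ) ≤ s n + ∑ k ∈ Finset.Ico n m, e k := by
    have : (0 : ℝ) ≤ ∑ k ∈ Finset.Ico n m, e k := Finset.sum_nonneg fun k _ => he k
    linarith [hs n]
  calc s m ≤ (∏ k ∈ Finset.Ico n m, (1 + c k)) * (s n + ∑ k ∈ Finset.Ico n m, e k) := h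
    _ ≤ Real.exp (∑' k, c k) * (s n + ∑ k ∈ Finset.Ico n m, e k) :=
        mul_le_mul_of_nonneg_right hP hA

lemma aux_tendsto (s c e : ℕ → ℝ) (hc : ∀ n, 0 ≤ c n) (he : ∀ n, 0 ≤ e n)
    (hs : ∀ n, 0 ≤ s n) (hcs : Summable c) (hes : Summable e)
    (hrec : ∀ n, 1 ≤ n → s (n + 1) ≤ (1 + c n) * s n + e n)
    (hlim : Filter.liminf s Filter.atTop = 0) :
    Filter.Tendsto s Filter.atTop (nhds 0) := by
  rw [Metric.tendsto_atTop]
  intro ε hε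
  set C := Real.exp (∑' k, c k) with hCdef
  have hC : (1 : ℝ) ≤ C := Real.one_le_exp (tsum_nonneg hc)
  have hC0 : (0 : ℝ) < C := by linarith
  set δ := ε / (2 * C) with hδdef
  have hδ : 0 < δ := div_pos hε (by linarith)
  -- Cauchy criterion for partial sums of `e`
  have hScauchy : CauchySeq (fun n => ∑ k ∈ Finset.range n, e k) :=
    hes.hasSum.tendsto_sum_nat.cauchySeq
  obtain ⟨N₀, hN₀⟩ := Metric.cauchySeq_iff.mp hScauchy δ hδ
  -- from liminf = 0, frequently s n < δ
  have hbound : ∀ m, 1 ≤ m → s m ≤ C * (s 1 + ∑' k, e k) := by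
    intro m hm
    have h1 := aux_growth s c e hc he hs hcs hrec 1 le_rfl m hm
    refine h1.trans (mul_le_mul_of_nonneg_left ?_ hC0.le)
    have : ∑ k ∈ Finset.Ico 1 m, e k ≤ ∑' k, e k := Summable.sum_le_tsum _ (fun k _ => he k) hes
    linarith
  have hcob : Filter.IsCoboundedUnder (· ≥ ·) Filter.atTop s := by
    apply Filter.isCoboundedUnder_ge_of_le _ (x := max (s 0) (C * (s 1 + ∑' k, e k)))
    intro i
    rcases Nat.eq_zero_or_pos i with h0 | h1
    · rw [h0]; exact le_max_left _ _
    · exact (hbound i h1).trans (le_max_right _ _)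
  have hfreq : ∃ᶠ n in Filter.atTop, s n < δ :=
    Filter.frequently_lt_of_liminf_lt hcob (by rw [hlim]; exact hδ)
  obtain ⟨n, hn, hsn⟩ := (Filter.frequently_atTop).mp hfreq (max N₀ 1)
  refine ⟨n, fun m hm => ?_⟩
  have hn1 : 1 ≤ n := le_trans (le_max_right _ _) hn
  have hnN₀ : N₀ ≤ n := le_trans (le_max_left _ _) hn
  have hSig : ∑ k ∈ Finset.Ico n m, e k < δ := by
    have := hN₀ m (le_trans hnN₀ hm) n hnN₀
    rw [Real.dist_eq] at this
    have habs := lt_of_abs_lt this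
    rw [Finset.sum_Ico_eq_sub _ hm]
    linarith [abs_nonneg ((∑ k ∈ Finset.range m, e k) - ∑ k ∈ Finset.range n, e k)]
  have hkey := aux_growth s c e hc he hs hcs hrec n hn1 m hm
  have hlt : s m < C * (2 * δ) :=
    lt_of_le_of_lt hkey (mul_lt_mul_of_pos_left (by linarith) hC0)
  rw [Real.dist_eq, sub_zero, abs_of_nonneg (hs m)]
  have hCd : C * (2 * δ) = ε := by rw [hδdef]; field_simp
  linarith

theorem stmt_11 {E : Type*} [NormedAddCommGroup E] [NormedSpace ℝ E] [CompleteSpace E]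
    (K : Set E) (hKne : K.Nonempty) (hKclosed : IsClosed K) (hKconvex : Convex ℝ K)
    (P T₁ T₂ : E → E)
    (hPrange : ∀ x, P x ∈ K)
    (hPnonexp : ∀ x y, ‖P x - P y‖ ≤ ‖x - y‖)
    (hPretr : ∀ x ∈ K, P x = x)
    (hT₁cont : ContinuousOn T₁ K) (hT₂cont : ContinuousOn T₂ K)
    (μ lam : ℕ → ℝ)
    (hμ : ∀ n, 0 ≤ μ n) (hlam : ∀ n, 0 ≤ lam n)
    (hμs : Summable μ) (hlams : Summable lam)
    (φ : ℝ → ℝ) (hφmono : StrictMonoOn φ (Set.Ici (0 : ℝ)))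
    (hφcont : ContinuousOn φ (Set.Ici (0 : ℝ))) (hφ0 : φ 0 = 0)
    (M Mstar : ℝ) (hM : 0 < M) (hMstar : 0 < Mstar)
    (hgrowth : ∀ κ ≥ M, φ κ ≤ Mstar * κ)
    (hT₁ : ∀ x ∈ K, ∀ y ∈ K, ∀ n ≥ 1,
      ‖(P ∘ T₁)^[n] x - (P ∘ T₁)^[n] y‖ ≤ ‖x - y‖ + μ n * φ ‖x - y‖ + lam n)
    (hT₂ : ∀ x ∈ K, ∀ y ∈ K, ∀ n ≥ 1,
      ‖(P ∘ T₂)^[n] x - (P ∘ T₂)^[n] y‖ ≤ ‖x - y‖ + μ n * φ ‖x - y‖ + lam n)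
    (F : Set E) (hF : F = {x ∈ K | T₁ x = x ∧ T₂ x = x}) (hFne : F.Nonempty)
    (α β : ℕ → ℝ) (hα : ∀ n, α n ∈ Set.Icc (0 : ℝ) 1) (hβ : ∀ n, β n ∈ Set.Icc (0 : ℝ) 1)
    (x y : ℕ → E) (hxK : ∀ n, x n ∈ K)
    (hy : ∀ n ≥ 1, y n = (1 - β n) • x n + β n • (P ∘ T₁)^[n] (x n))
    (hx : ∀ n ≥ 1, x (n + 1) = (1 - α n) • (P ∘ T₁)^[n] (y n) + α n • (P ∘ T₂)^[n] (y n)) :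
    (∃ q ∈ F, Filter.Tendsto x Filter.atTop (nhds q)) ↔
      Filter.liminf (fun n => Metric.infDist (x n) F) Filter.atTop = 0 := by
  classical
  -- basic facts about φ
  have hphiM : 0 ≤ φ M := by
    have h := hφmono (Set.mem_Ici.mpr le_rfl) (Set.mem_Ici.mpr hM.le) hM
    rw [hφ0] at h; exact h.le
  have hphibound : ∀ t, 0 ≤ t → φ t ≤ φ M + Mstar * t := by
    intro t ht
    rcases le_or_gt t M with h | h
    · have h1 : φ t ≤ φ M := by
        rcases eq_or_lt_of_le h with rfl | h2
        · exact le_rfl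
        · exact (hφmono (Set.mem_Ici.mpr ht) (Set.mem_Ici.mpr hM.le) h2).le
      nlinarith
    · have h2 := hgrowth t h.le
      nlinarith
  have hphinonneg : ∀ t, 0 ≤ t → 0 ≤ φ t := by
    intro t ht
    rcases eq_or_lt_of_le ht with h | h
    · rw [← h, hφ0]
    · have h2 := hφmono (Set.mem_Ici.mpr le_rfl) (Set.mem_Ici.mpr ht) h
      rw [hφ0] at h2; exact h2.le
  -- iterates stay in K
  have hitK : ∀ (T : E → E) (z : E) (n : ℕ), 1 ≤ n → (P ∘ T)^[n] z ∈ K := by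
    intro T z n hn
    obtain ⟨m, rfl⟩ : ∃ m, n = m + 1 := ⟨n - 1, (Nat.succ_pred_eq_of_pos hn).symm⟩
    rw [Function.iterate_succ_apply']
    exact hPrange _
  have hFmem : ∀ p ∈ F, p ∈ K ∧ T₁ p = p ∧ T₂ p = p := by
    intro p hp; rw [hF] at hp; exact ⟨hp.1, hp.2.1, hp.2.2⟩
  have hfix : ∀ (T : E → E), (∀ p ∈ F, T p = p) → ∀ p ∈ F, ∀ n, (P ∘ T)^[n] p = p := by
    intro T hT p hp n
    apply Function.iterate_fixed
    show P (T p) = p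
    rw [hT p hp, hPretr p (hFmem p hp).1]
  have hfix₁ := hfix T₁ (fun p hp => (hFmem p hp).2.1)
  have hfix₂ := hfix T₂ (fun p hp => (hFmem p hp).2.2)
  set B := ∑' k, μ k with hB
  have hμB : ∀ n, μ n ≤ B := fun n => Summable.le_tsum hμs n (fun k _ => hμ k)
  have hB0 : 0 ≤ B := tsum_nonneg hμ
  set c : ℕ → ℝ := fun n => 2 * (Mstar * μ n) + (Mstar * μ n) ^ 2 with hcdef
  set e : ℕ → ℝ := fun n => (2 + Mstar * μ n) * (φ M * μ n + lam n) with hedef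
  have hc0 : ∀ n, 0 ≤ c n := by
    intro n; have h := hμ n
    simp only [hcdef]; positivity
  have he0 : ∀ n, 0 ≤ e n := by
    intro n; have h1 := hμ n; have h2 := hlam n
    simp only [hedef]
    have h4 : (0:ℝ) ≤ φ M * μ n := mul_nonneg hphiM h1
    have h5 : (0:ℝ) ≤ Mstar * μ n := mul_nonneg hMstar.le h1
    exact mul_nonneg (by linarith) (by linarith)
  have hcs : Summable c := by
    refine Summable.of_nonneg_of_le hc0 (fun n => ?_) (hμs.mul_left (2 * Mstar + Mstar ^ 2 * B))
    have h1 := hμ n; have h2 := hμB n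
    simp only [hcdef]
    nlinarith [mul_nonneg (mul_nonneg (sq_nonneg Mstar) h1) (sub_nonneg.mpr h2)]
  have hes : Summable e := by
    refine Summable.of_nonneg_of_le he0 (fun n => ?_)
      (((hμs.mul_left (φ M)).add hlams).mul_left (2 + Mstar * B))
    have h1 := hμ n; have h2 := hμB n; have h3 := hlam n
    simp only [hedef]
    nlinarith [mul_nonneg (mul_nonneg hMstar.le (sub_nonneg.mpr h2))
      (add_nonneg (mul_nonneg hphiM h1) h3)]
  -- the key one-step estimate
  have key : ∀ p ∈ F, ∀ n, 1 ≤ n → ‖x (n + 1) - p‖ ≤ (1 + c n) * ‖x n - p‖ + e n := by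
    intro p hp n hn
    have hpK := (hFmem p hp).1
    have hxnK := hxK n
    have hwK : (P ∘ T₁)^[n] (x n) ∈ K := hitK T₁ _ n hn
    have hynK : y n ∈ K := by
      rw [hy n hn]
      exact hKconvex hxnK hwK (by linarith [(hβ n).2]) (hβ n).1 (by ring)
    have hd0 : (0:ℝ) ≤ ‖x n - p‖ := norm_nonneg _
    have hstep1 : ‖y n - p‖ ≤ (1 + Mstar * μ n) * ‖x n - p‖ + (φ M * μ n + lam n) := by
      have hsplit : y n - p = (1 - β n) • (x n - p) + β n • ((P ∘ T₁)^[n] (x n) - p) := by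
        rw [hy n hn]; module
      have h1 : ‖(P ∘ T₁)^[n] (x n) - p‖ ≤ ‖x n - p‖ + μ n * φ ‖x n - p‖ + lam n := by
        have h := hT₁ (x n) hxnK p hpK n hn
        rwa [hfix₁ p hp n] at h
      have hφd := hphibound _ hd0
      have hφd0 := hphinonneg _ hd0
      have hX : (0:ℝ) ≤ μ n * φ ‖x n - p‖ + lam n := by
        have := mul_nonneg (hμ n) hφd0; linarith [hlam n]
      calc ‖y n - p‖ ≤ (1 - β n) * ‖x n - p‖ + β n * ‖(P ∘ T₁)^[n] (x n) - p‖ := by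
            rw [hsplit]
            refine (norm_add_le _ _).trans ?_
            rw [norm_smul, norm_smul, Real.norm_eq_abs, Real.norm_eq_abs,
              abs_of_nonneg (by linarith [(hβ n).2] : (0:ℝ) ≤ 1 - β n),
              abs_of_nonneg (hβ n).1]
        _ ≤ ‖x n - p‖ + (μ n * φ ‖x n - p‖ + lam n) := by
            nlinarith [mul_nonneg (hβ n).1 (sub_nonneg.mpr h1),
              mul_nonneg (by linarith [(hβ n).2] : (0:ℝ) ≤ 1 - β n) hX]
        _ ≤ (1 + Mstar * μ n) * ‖x n - p‖ + (φ M * μ n + lam n) := by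
            nlinarith [mul_le_mul_of_nonneg_left hφd (hμ n)]
    have hy0 : (0:ℝ) ≤ ‖y n - p‖ := norm_nonneg _
    have hstep2 : ‖x (n + 1) - p‖ ≤ (1 + Mstar * μ n) * ‖y n - p‖ + (φ M * μ n + lam n) := by
      have h1 : ‖(P ∘ T₁)^[n] (y n) - p‖ ≤ ‖y n - p‖ + μ n * φ ‖y n - p‖ + lam n := by
        have h := hT₁ (y n) hynK p hpK n hn; rwa [hfix₁ p hp n] at h
      have h2 : ‖(P ∘ T₂)^[n] (y n) - p‖ ≤ ‖y n - p‖ + μ n * φ ‖y n - p‖ + lam n := by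
        have h := hT₂ (y n) hynK p hpK n hn; rwa [hfix₂ p hp n] at h
      have hsplit : x (n + 1) - p
          = (1 - α n) • ((P ∘ T₁)^[n] (y n) - p) + α n • ((P ∘ T₂)^[n] (y n) - p) := by
        rw [hx n hn]; module
      have hφd := hphibound _ hy0
      have hφd0 := hphinonneg _ hy0
      calc ‖x (n + 1) - p‖
          ≤ (1 - α n) * ‖(P ∘ T₁)^[n] (y n) - p‖ + α n * ‖(P ∘ T₂)^[n] (y n) - p‖ := by
            rw [hsplit]
            refine (norm_add_le _ _).trans ?_
            rw [norm_smul, norm_smul, Real.norm_eq_abs, Real.norm_eq_abs,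
              abs_of_nonneg (by linarith [(hα n).2] : (0:ℝ) ≤ 1 - α n),
              abs_of_nonneg (hα n).1]
        _ ≤ ‖y n - p‖ + μ n * φ ‖y n - p‖ + lam n := by
            nlinarith [mul_nonneg (by linarith [(hα n).2] : (0:ℝ) ≤ 1 - α n)
                (sub_nonneg.mpr h1),
              mul_nonneg (hα n).1 (sub_nonneg.mpr h2)]
        _ ≤ (1 + Mstar * μ n) * ‖y n - p‖ + (φ M * μ n + lam n) := by
            nlinarith [mul_le_mul_of_nonneg_left hφd (hμ n)]
    have hmul : (0:ℝ) ≤ 1 + Mstar * μ n := by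
      have := hμ n; positivity
    calc ‖x (n + 1) - p‖ ≤ (1 + Mstar * μ n) * ‖y n - p‖ + (φ M * μ n + lam n) := hstep2
      _ ≤ (1 + Mstar * μ n) * ((1 + Mstar * μ n) * ‖x n - p‖ + (φ M * μ n + lam n))
          + (φ M * μ n + lam n) := by
          exact add_le_add_left (mul_le_mul_of_nonneg_left hstep1 hmul) _
      _ = (1 + c n) * ‖x n - p‖ + e n := by
          simp only [hcdef, hedef]; ring
  have hs0 : ∀ n, 0 ≤ Metric.infDist (x n) F := fun n => Metric.infDist_nonneg
  -- the recursion for infDist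
  have keyd : ∀ n, 1 ≤ n →
      Metric.infDist (x (n + 1)) F ≤ (1 + c n) * Metric.infDist (x n) F + e n := by
    intro n hn
    by_contra hcon
    push_neg at hcon
    have hc1 : (0:ℝ) < 1 + c n := by linarith [hc0 n]
    set ε : ℝ := (Metric.infDist (x (n + 1)) F - ((1 + c n) * Metric.infDist (x n) F + e n))
      / (1 + c n) with hεdef
    have hε : 0 < ε := div_pos (by linarith) hc1
    obtain ⟨p, hpF, hpd⟩ := (Metric.infDist_lt_iff hFne).mp
      (show Metric.infDist (x n) F < Metric.infDist (x n) F + ε by linarith)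
    have h1 : Metric.infDist (x (n + 1)) F ≤ dist (x (n + 1)) p :=
      Metric.infDist_le_dist_of_mem hpF
    have h2 := key p hpF n hn
    rw [dist_eq_norm] at h1 hpd
    have h3 : (1 + c n) * ‖x n - p‖ ≤ (1 + c n) * (Metric.infDist (x n) F + ε) :=
      mul_le_mul_of_nonneg_left hpd.le hc1.le
    have h4 : (1 + c n) * ε
        = Metric.infDist (x (n + 1)) F - ((1 + c n) * Metric.infDist (x n) F + e n) := by
      rw [hεdef, mul_div_cancel₀ _ (ne_of_gt hc1)]
    nlinarith
  constructor
  · rintro ⟨q, hqF, hq⟩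
    have h2 : Filter.Tendsto (fun n => dist (x n) q) Filter.atTop (nhds 0) :=
      tendsto_iff_dist_tendsto_zero.mp hq
    have h1 : Filter.Tendsto (fun n => Metric.infDist (x n) F) Filter.atTop (nhds 0) :=
      squeeze_zero (fun n => Metric.infDist_nonneg)
        (fun n => Metric.infDist_le_dist_of_mem hqF) h2
    exact h1.liminf_eq
  · intro hlim
    have hd0 : Filter.Tendsto (fun n => Metric.infDist (x n) F) Filter.atTop (nhds 0) :=
      aux_tendsto _ c e hc0 he0 hs0 hcs hes keyd hlim
    have hFclosed : IsClosed F := by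
      have h1 : IsClosed (K ∩ (fun z => T₁ z - z) ⁻¹' {0}) :=
        (hT₁cont.sub continuousOn_id).preimage_isClosed_of_isClosed hKclosed isClosed_singleton
      have h2 : IsClosed (K ∩ (fun z => T₂ z - z) ⁻¹' {0}) :=
        (hT₂cont.sub continuousOn_id).preimage_isClosed_of_isClosed hKclosed isClosed_singleton
      have heq : F = (K ∩ (fun z => T₁ z - z) ⁻¹' {0}) ∩ (K ∩ (fun z => T₂ z - z) ⁻¹' {0}) := by
        rw [hF]; ext z
        simp only [Set.mem_setOf_eq, Set.mem_inter_iff, Set.mem_preimage,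
          Set.mem_singleton_iff, sub_eq_zero]
        tauto
      rw [heq]; exact h1.inter h2
    have hC : (1:ℝ) ≤ Real.exp (∑' k, c k) := Real.one_le_exp (tsum_nonneg hc0)
    have hcauchy : CauchySeq x := by
      rw [Metric.cauchySeq_iff']
      intro ε hε
      set C := Real.exp (∑' k, c k) with hCdef
      set δ := ε / (6 * C) with hδdef
      have hδ0 : 0 < δ := div_pos hε (by linarith)
      have hScauchy : CauchySeq (fun n => ∑ k ∈ Finset.range n, e k) :=
        hes.hasSum.tendsto_sum_nat.cauchySeq
      obtain ⟨N₀, hN₀⟩ := Metric.cauchySeq_iff.mp hScauchy δ hδ0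
      obtain ⟨N₁, hN₁⟩ := Metric.tendsto_atTop.mp hd0 δ hδ0
      set N := max (max N₀ N₁) 1 with hNdef
      refine ⟨N, fun m hm => ?_⟩
      have hN1 : 1 ≤ N := le_max_right _ _
      have hNN₀ : N₀ ≤ N := le_trans (le_max_left _ _) (le_max_left _ _)
      have hNN₁ : N₁ ≤ N := le_trans (le_max_right _ _) (le_max_left _ _)
      have hdN : Metric.infDist (x N) F < δ := by
        have h := hN₁ N hNN₁
        rwa [Real.dist_eq, sub_zero, abs_of_nonneg (hs0 N)] at h
      obtain ⟨p, hpF, hppd⟩ := (Metric.infDist_lt_iff hFne).mp hdN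
      have hg := aux_growth (fun k => ‖x k - p‖) c e hc0 he0 (fun k => norm_nonneg _) hcs
        (key p hpF) N hN1 m hm
      rw [← hCdef] at hg
      have hsum : ∑ k ∈ Finset.Ico N m, e k < δ := by
        have h := hN₀ m (le_trans hNN₀ hm) N hNN₀
        rw [Real.dist_eq] at h
        have habs := lt_of_abs_lt h
        rw [Finset.sum_Ico_eq_sub _ hm]; linarith
      rw [dist_eq_norm] at hppd
      have h3 : ‖x m - p‖ < C * (2 * δ) :=
        lt_of_le_of_lt hg (mul_lt_mul_of_pos_left (by linarith) (by linarith))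
      have h4 : ‖x m - x N‖ ≤ ‖x m - p‖ + ‖x N - p‖ := by
        calc ‖x m - x N‖ = ‖(x m - p) - (x N - p)‖ := by
              congr 1; abel
          _ ≤ ‖x m - p‖ + ‖x N - p‖ := norm_sub_le _ _
      have hCδ : C * δ = ε / 6 := by
        rw [hδdef]; field_simp
      rw [dist_eq_norm]
      nlinarith [mul_nonneg (by linarith : (0:ℝ) ≤ C - 1) hδ0.le]
    obtain ⟨q, hq⟩ := cauchySeq_tendsto_of_complete hcauchy
    have hqtend : Filter.Tendsto (fun n => Metric.infDist (x n) F) Filter.atTop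
        (nhds (Metric.infDist q F)) :=
      ((Metric.continuous_infDist_pt F).tendsto q).comp hq
    have hqinf : Metric.infDist q F = 0 := tendsto_nhds_unique hqtend hd0
    exact ⟨q, (hFclosed.mem_iff_infDist_zero hFne).mpr hqinf, hq⟩
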